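/- Let X⋆ ∈ ℝ^{I₁×I₂×I₃} have tubal rank R with skinny t-SVD X⋆ = U⋆*Σ⋆*V⋆ᵀ. For any L_k ∈ ℝ^{I₁×R×I₃} and R_k ∈ ℝ^{I₂×R×I₃}, if dist(L_k,R_k;L⋆,R⋆) ≤ (ε/√I₃)·σ_min(X⋆) for some 0 < ε < 1, then ‖L_k*R_kᵀ − X⋆‖_F ≤ (1 + ε/2)·√2·dist(L_k,R_k;L⋆,R⋆). -/

import Mathlib

open scoped BigOperators
open Matrix

/-- An order-3 real tensor. -/
abbrev Tensor (I₁ I₂ I₃ : ℕ) := Fin I₁ → Fin I₂ → Fin I₃ → ℝ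

namespace RTPCA

variable {I₁ I₂ I₃ J R : ℕ}

/-- The t-product, computed by circular convolution along the third mode
(equivalently, slice-wise products in the Fourier domain). -/
noncomputable def tprod (A : Tensor I₁ I₂ I₃) (B : Tensor I₂ J I₃) : Tensor I₁ J I₃ :=
  fun i j k => ∑ l : Fin I₂, ∑ t : Fin I₃, A i l t * B l j (k - t)

/-- The tensor transpose: transpose each frontal slice and reverse the order
of the frontal slices 2 through I₃. -/
def tT (A : Tensor I₁ I₂ I₃) : Tensor I₂ I₁ I₃ :=
  fun j i k => A i j (-k)

/-- The identity tensor: first frontal slice is the identity, the rest are zero. -/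
def idT (R I₃ : ℕ) : Tensor R R I₃ :=
  fun i j k => if i = j ∧ (k : ℕ) = 0 then 1 else 0

/-- Discrete Fourier transform along the third mode. -/
noncomputable def dft (A : Tensor I₁ I₂ I₃) (i : Fin I₁) (j : Fin I₂) (k : Fin I₃) : ℂ :=
  ∑ t : Fin I₃, (A i j t : ℂ) *
    Complex.exp (-(2 * Real.pi * Complex.I * (k.val : ℂ) * (t.val : ℂ)) / (I₃ : ℂ))

/-- Fourier-domain frontal slice. -/
noncomputable def fSlice (A : Tensor I₁ I₂ I₃) (k : Fin I₃) : Matrix (Fin I₁) (Fin I₂) ℂ :=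
  Matrix.of fun i j => dft A i j k

/-- Inverse DFT along the third mode (real part). -/
noncomputable def invDft (F : Fin I₁ → Fin I₂ → Fin I₃ → ℂ) : Tensor I₁ I₂ I₃ :=
  fun i j t =>
    ((∑ k : Fin I₃, F i j k *
      Complex.exp ((2 * Real.pi * Complex.I * (k.val : ℂ) * (t.val : ℂ)) / (I₃ : ℂ))) / (I₃ : ℂ)).re

/-- Squared Frobenius norm. -/
noncomputable def fro2 (A : Tensor I₁ I₂ I₃) : ℝ := ∑ i, ∑ j, ∑ k, (A i j k) ^ 2

/-- Frobenius norm. -/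
noncomputable def froNorm (A : Tensor I₁ I₂ I₃) : ℝ := Real.sqrt (fro2 A)

/-- Entrywise sup norm ‖A‖_∞. -/
noncomputable def infNorm (A : Tensor I₁ I₂ I₃) : ℝ := ⨆ i, ⨆ j, ⨆ k, |A i j k|

/-- ℓ_{2,∞} norm: largest ℓ₂ norm of a horizontal slice. -/
noncomputable def twoInfNorm (A : Tensor I₁ I₂ I₃) : ℝ :=
  ⨆ i, Real.sqrt (∑ j, ∑ k, (A i j k) ^ 2)

/-- ℓ_{1,∞} norm: largest ℓ₁ norm of a horizontal slice. -/
noncomputable def oneInfNorm (A : Tensor I₁ I₂ I₃) : ℝ := ⨆ i, ∑ j, ∑ k, |A i j k|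

/-- Spectral norm (largest singular value) of a complex matrix. -/
noncomputable def matSpecNorm {m n : ℕ} (M : Matrix (Fin m) (Fin n) ℂ) : ℝ :=
  ‖LinearMap.toContinuousLinearMap (Matrix.toEuclideanLin M)‖

/-- Tensor spectral norm = tensor operator norm: the largest singular value of
the Fourier-domain frontal slices. -/
noncomputable def specNorm (A : Tensor I₁ I₂ I₃) : ℝ :=
  ⨆ k : Fin I₃, matSpecNorm (fSlice A k)

/-- f-diagonal in the Fourier domain with strictly positive diagonal entries. -/
def FDiagPos (S : Tensor R R I₃) : Prop :=
  (∀ k, ∀ i j : Fin R, i ≠ j → fSlice S k i j = 0) ∧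
  (∀ k, ∀ i : Fin R, 0 < (fSlice S k i i).re ∧ (fSlice S k i i).im = 0)

/-- f-diagonal in the Fourier domain with nonnegative diagonal entries. -/
def FDiagNonneg (S : Tensor R R I₃) : Prop :=
  (∀ k, ∀ i j : Fin R, i ≠ j → fSlice S k i j = 0) ∧
  (∀ k, ∀ i : Fin R, 0 ≤ (fSlice S k i i).re ∧ (fSlice S k i i).im = 0)

/-- Skinny t-SVD with tubal rank R (strictly positive Fourier-domain diagonal). -/
structure IsSkinnyTSVD (X : Tensor I₁ I₂ I₃) (U : Tensor I₁ R I₃)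
    (S : Tensor R R I₃) (V : Tensor I₂ R I₃) : Prop where
  decomp : X = tprod (tprod U S) (tT V)
  orthU : tprod (tT U) U = idT R I₃
  orthV : tprod (tT V) V = idT R I₃
  diag : FDiagPos S

/-- Skinny t-SVD with tubal rank at most R (nonnegative diagonal allowed). -/
structure IsSkinnyTSVDLe (X : Tensor I₁ I₂ I₃) (U : Tensor I₁ R I₃)
    (S : Tensor R R I₃) (V : Tensor I₂ R I₃) : Prop where
  decomp : X = tprod (tprod U S) (tT V)
  orthU : tprod (tT U) U = idT R I₃
  orthV : tprod (tT V) V = idT R I₃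
  diag : FDiagNonneg S

/-- σ_min: the smallest Fourier-domain diagonal entry of Σ. -/
noncomputable def sigmaMin (S : Tensor R R I₃) : ℝ :=
  ⨅ k : Fin I₃, ⨅ i : Fin R, (fSlice S k i i).re

/-- σ_max (= σ₁): the largest Fourier-domain diagonal entry of Σ. -/
noncomputable def sigmaMax (S : Tensor R R I₃) : ℝ :=
  ⨆ k : Fin I₃, ⨆ i : Fin R, (fSlice S k i i).re

/-- Condition number κ = σ_max / σ_min. -/
noncomputable def condNum (S : Tensor R R I₃) : ℝ := sigmaMax S / sigmaMin S

/-- Σ^{1/2}: entrywise square roots in the Fourier domain. -/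
noncomputable def sqrtT (S : Tensor R R I₃) : Tensor R R I₃ :=
  invDft fun i j k => (Real.sqrt ((dft S i j k).re) : ℂ)

/-- Σ^{-1/2}: entrywise reciprocal square roots in the Fourier domain. -/
noncomputable def invSqrtT (S : Tensor R R I₃) : Tensor R R I₃ :=
  invDft fun i j k => (((Real.sqrt ((dft S i j k).re))⁻¹ : ℝ) : ℂ)

/-- `Qi` is a two-sided t-product inverse of `Q` (i.e. `Q ∈ GL(R)`). -/
def TInv (Q Qi : Tensor R R I₃) : Prop :=
  tprod Q Qi = idT R I₃ ∧ tprod Qi Q = idT R I₃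

/-- Alignment error (the quantity inside the infimum defining `distT`)
for a given invertible Q with inverse Qi. -/
noncomputable def alignErr (L Ls : Tensor I₁ R I₃) (Rt Rs : Tensor I₂ R I₃)
    (Sh : Tensor R R I₃) (Q Qi : Tensor R R I₃) : ℝ :=
  Real.sqrt ((froNorm (tprod (tprod L Q - Ls) Sh)) ^ 2 +
    (froNorm (tprod (tprod Rt (tT Qi) - Rs) Sh)) ^ 2)

/-- The distance metric dist(L,R;L⋆,R⋆): the infimum of alignment errors over
invertible tensors Q, where `Sh` is Σ⋆^{1/2}. -/
noncomputable def distT (L Ls : Tensor I₁ R I₃) (Rt Rs : Tensor I₂ R I₃)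
    (Sh : Tensor R R I₃) : ℝ :=
  sInf {d : ℝ | ∃ Q Qi : Tensor R R I₃, TInv Q Qi ∧ d = alignErr L Ls Rt Rs Sh Q Qi}

/-- Q (with inverse Qi) is an optimal alignment tensor: it attains the infimum
defining the distance metric. -/
def IsOptAlign (L Ls : Tensor I₁ R I₃) (Rt Rs : Tensor I₂ R I₃)
    (Sh : Tensor R R I₃) (Q Qi : Tensor R R I₃) : Prop :=
  TInv Q Qi ∧ alignErr L Ls Rt Rs Sh Q Qi = distT L Ls Rt Rs Sh

/-- Entrywise soft-thresholding. -/
noncomputable def softThresh (ζ : ℝ) (A : Tensor I₁ I₂ I₃) : Tensor I₁ I₂ I₃ :=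
  fun i j k => Real.sign (A i j k) * max 0 (|A i j k| - ζ)

/-- Support: the set of index triples at which the tensor is nonzero. -/
def supp (A : Tensor I₁ I₂ I₃) : Set (Fin I₁ × Fin I₂ × Fin I₃) :=
  {p | A p.1 p.2.1 p.2.2 ≠ 0}

/-- α-sparsity: every horizontal, lateral and frontal slice has at most an
α fraction of nonzero entries. -/
def IsSparse (α : ℝ) (S : Tensor I₁ I₂ I₃) : Prop :=
  (∀ i₁ : Fin I₁, ({p : Fin I₂ × Fin I₃ | S i₁ p.1 p.2 ≠ 0}.ncard : ℝ) ≤ α * I₂ * I₃) ∧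
  (∀ i₂ : Fin I₂, ({p : Fin I₁ × Fin I₃ | S p.1 i₂ p.2 ≠ 0}.ncard : ℝ) ≤ α * I₁ * I₃) ∧
  (∀ i₃ : Fin I₃, ({p : Fin I₁ × Fin I₂ | S p.1 p.2 i₃ ≠ 0}.ncard : ℝ) ≤ α * I₁ * I₂)

/-- Tensor μ-incoherence conditions for the skinny t-SVD factors U, V. -/
def Incoherent (μ : ℝ) (U : Tensor I₁ R I₃) (V : Tensor I₂ R I₃) : Prop :=
  twoInfNorm U ≤ Real.sqrt (μ * R / I₁) ∧ twoInfNorm V ≤ Real.sqrt (μ * R / I₂)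

/-- Top-R truncated t-SVD of A: a skinny t-SVD-shaped factorization which, in
every Fourier-domain frontal slice, keeps R largest singular values together
with their singular vectors (the residual is orthogonal to the kept singular
vectors and its spectral norm is at most every kept singular value). -/
structure IsTruncTSVD (A : Tensor I₁ I₂ I₃) (U : Tensor I₁ R I₃)
    (S : Tensor R R I₃) (V : Tensor I₂ R I₃) : Prop where
  orthU : tprod (tT U) U = idT R I₃
  orthV : tprod (tT V) V = idT R I₃
  diag : FDiagNonneg S
  leftOrth : ∀ k, (fSlice U k)ᴴ * (fSlice A k - fSlice (tprod (tprod U S) (tT V)) k) = 0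
  rightOrth : ∀ k, (fSlice A k - fSlice (tprod (tprod U S) (tT V)) k) * fSlice V k = 0
  topR : ∀ k, ∀ r : Fin R,
    matSpecNorm (fSlice A k - fSlice (tprod (tprod U S) (tT V)) k) ≤ (fSlice S k r r).re

end RTPCA

open RTPCA


section AuxEK
open Complex

/-- exponential kernel -/
noncomputable def eK (n : ℕ) (m : ℤ) : ℂ := Complex.exp (-(2 * Real.pi * Complex.I * m) / n)

lemma eK_add (n : ℕ) (a b : ℤ) : eK n (a + b) = eK n a * eK n b := by
  rw [eK, eK, eK, ← Complex.exp_add]; congr 1; push_cast; ring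

lemma eK_zero (n : ℕ) : eK n 0 = 1 := by simp [eK]

lemma eK_add_mul (n : ℕ) [NeZero n] (m q : ℤ) : eK n (m + n * q) = eK n m := by
  have hn : (n:ℂ) ≠ 0 := Nat.cast_ne_zero.mpr (NeZero.ne n)
  have h2 : eK n ((n:ℤ) * q) = 1 := by
    have h1 : -(2 * (Real.pi:ℂ) * Complex.I * (((n:ℤ) * q : ℤ):ℂ)) / n = (-q : ℤ) * (2 * Real.pi * Complex.I) := by
      push_cast; field_simp
    rw [eK, h1, Complex.exp_int_mul_two_pi_mul_I]
  rw [eK_add, h2, mul_one]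

lemma eK_congr (n : ℕ) [NeZero n] {a b : ℤ} (h : a % n = b % n) : eK n a = eK n b := by
  have hd : (n:ℤ) ∣ b - a := Int.ModEq.dvd (h : Int.ModEq (n:ℤ) a b)
  obtain ⟨q, hq⟩ := hd
  have : b = a + n * q := by linarith
  rw [this, eK_add_mul]

lemma eK_conj (n : ℕ) (m : ℤ) : (starRingEnd ℂ) (eK n m) = eK n (-m) := by
  rw [eK, eK, ← Complex.exp_conj]
  congr 1
  simp only [map_div₀, map_neg, _root_.map_mul, Complex.conj_I, Complex.conj_ofReal, map_ofNat,
    map_natCast, map_intCast]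
  push_cast
  ring

lemma eK_natmul (n : ℕ) (m : ℤ) (t : ℕ) : eK n (m * t) = (eK n m) ^ t := by
  rw [eK, eK, ← Complex.exp_nat_mul]; congr 1; push_cast; ring

lemma eK_sum (n : ℕ) [NeZero n] (m : ℤ) :
    ∑ t : Fin n, eK n (m * t.val) = if (n:ℤ) ∣ m then (n:ℂ) else 0 := by
  have hrw : ∑ t : Fin n, eK n (m * t.val) = ∑ t ∈ Finset.range n, (eK n m)^t := by
    rw [← Fin.sum_univ_eq_sum_range (fun t => (eK n m)^t) n]
    exact Finset.sum_congr rfl fun t _ => eK_natmul n m t.val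
  rw [hrw]
  by_cases hd : (n:ℤ) ∣ m
  · have h1 : eK n m = 1 := by
      have : eK n m = eK n 0 := eK_congr n (by
        simp [Int.emod_emod_of_dvd, Int.emod_eq_zero_of_dvd hd])
      rw [this, eK_zero]
    rw [if_pos hd]; simp [h1]
  · have hz : eK n m ≠ 1 := by
      intro hc
      rw [eK, Complex.exp_eq_one_iff]
      at hc
      obtain ⟨q, hq⟩ := hc
      have hn : (n:ℂ) ≠ 0 := Nat.cast_ne_zero.mpr (NeZero.ne n)
      have h2pi : (2 * (Real.pi:ℂ) * Complex.I) ≠ 0 := by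
        simp [Real.pi_ne_zero, Complex.I_ne_zero, Complex.ofReal_ne_zero]
      have hm : (-(m:ℂ)) = (q:ℂ) * n := by
        have := hq
        field_simp at this
        -- -(2πI m) = q (2πI) n
        have h3 : (2 * (Real.pi:ℂ) * Complex.I) * (-(m:ℂ)) = (2 * (Real.pi:ℂ) * Complex.I) * ((q:ℂ) * n) := by
          ring_nf
          ring_nf at this
          linear_combination (2 * (Real.pi:ℂ) * Complex.I) * this
        exact mul_left_cancel₀ h2pi h3
      have : (-m : ℤ) = q * n := by exact_mod_cast hm
      exact hd ⟨-q, by linarith⟩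
    rw [geom_sum_eq hz]
    have hpow : (eK n m)^n = 1 := by
      rw [← eK_natmul]
      have : eK n (m * n) = eK n 0 := eK_congr n (by
        simp [Int.mul_emod_left, Int.mul_emod_right])
      rw [this, eK_zero]
    rw [hpow]
    simp [hd]

end AuxEK

section AuxDFT
open Complex RTPCA

variable {I₁ I₂ I₃ J R : ℕ}

lemma fin_val_add_mod (n : ℕ) [NeZero n] (a b : Fin n) :
    (((a + b : Fin n).val : ℤ)) % n = (((a.val : ℤ) + b.val)) % n := by
  rw [Fin.val_add]
  push_cast
  exact Int.emod_emod_of_dvd _ dvd_rfl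

lemma fin_val_neg_mod (n : ℕ) [NeZero n] (a : Fin n) :
    (((-a : Fin n).val : ℤ)) % n = (-(a.val : ℤ)) % n := by
  have h : ((-a : Fin n)).val = (n - a.val) % n := rfl
  rw [h]
  push_cast [Nat.cast_sub (le_of_lt a.isLt)]
  have h1 : Int.ModEq (n:ℤ) (((n:ℤ) - a.val) % n) ((n:ℤ) - a.val) := Int.emod_emod_of_dvd _ dvd_rfl
  have h2 : Int.ModEq (n:ℤ) ((n:ℤ) - a.val) (0 - (a.val:ℤ)) :=
    Int.ModEq.sub (by simp [Int.ModEq, Int.emod_self]) (Int.ModEq.refl _)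
  have h3 := h1.trans h2
  have h4 : ((((n:ℤ) - a.val) % n) % n) = (0 - (a.val:ℤ)) % n := h3
  rw [Int.emod_emod_of_dvd _ dvd_rfl] at h4
  rw [h4]
  norm_num

lemma dft_apply (A : Tensor I₁ I₂ I₃) (i : Fin I₁) (j : Fin I₂) (k : Fin I₃) :
    dft A i j k = ∑ t : Fin I₃, (A i j t : ℂ) * eK I₃ ((k.val : ℤ) * (t.val : ℤ)) := by
  refine Finset.sum_congr rfl fun t _ => ?_
  congr 1
  rw [eK]
  congr 1
  push_cast
  ring

lemma dft_add (A B : Tensor I₁ I₂ I₃) (i : Fin I₁) (j : Fin I₂) (k : Fin I₃) :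
    dft (A + B) i j k = dft A i j k + dft B i j k := by
  simp only [dft, ← Finset.sum_add_distrib]
  refine Finset.sum_congr rfl fun t _ => ?_
  have : (A + B) i j t = A i j t + B i j t := rfl
  rw [this]
  push_cast
  ring

lemma dft_sub (A B : Tensor I₁ I₂ I₃) (i : Fin I₁) (j : Fin I₂) (k : Fin I₃) :
    dft (A - B) i j k = dft A i j k - dft B i j k := by
  simp only [dft, ← Finset.sum_sub_distrib]
  refine Finset.sum_congr rfl fun t _ => ?_
  have : (A - B) i j t = A i j t - B i j t := rfl
  rw [this]
  push_cast
  ring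

lemma dft_tprod [NeZero I₃] (A : Tensor I₁ I₂ I₃) (B : Tensor I₂ J I₃)
    (i : Fin I₁) (j : Fin J) (k : Fin I₃) :
    dft (tprod A B) i j k = ∑ l : Fin I₂, dft A i l k * dft B l j k := by
  rw [dft_apply]
  have htp : ∀ t : Fin I₃, tprod A B i j t = ∑ l : Fin I₂, ∑ s : Fin I₃, A i l s * B l j (t - s) :=
    fun t => rfl
  simp only [htp]
  have step1 : ∀ t : Fin I₃,
      ((∑ l : Fin I₂, ∑ s : Fin I₃, A i l s * B l j (t - s) : ℝ) : ℂ) * eK I₃ ((k.val:ℤ) * t.val)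
      = ∑ l : Fin I₂, ∑ s : Fin I₃, (A i l s : ℂ) * (B l j (t - s) : ℂ) * eK I₃ ((k.val:ℤ) * t.val) := by
    intro t
    push_cast
    rw [Finset.sum_mul]
    refine Finset.sum_congr rfl fun l _ => ?_
    rw [Finset.sum_mul]
  rw [Finset.sum_congr rfl fun t _ => step1 t]
  rw [Finset.sum_comm]
  refine Finset.sum_congr rfl fun l _ => ?_
  rw [dft_apply, dft_apply, Finset.sum_mul_sum]
  rw [Finset.sum_comm]
  refine Finset.sum_congr rfl fun s _ => ?_
  -- LHS: ∑ t, A i l s * B l j (t - s) * eK (k t); reindex t = u + s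
  rw [← Equiv.sum_comp (Equiv.addRight s) (fun t => (A i l s : ℂ) * (B l j (t - s) : ℂ) * eK I₃ ((k.val:ℤ) * t.val))]
  refine Finset.sum_congr rfl fun u _ => ?_
  have h1 : (Equiv.addRight s) u - s = u := by
    simp [Equiv.coe_addRight]
  have h2 : eK I₃ ((k.val:ℤ) * ((Equiv.addRight s) u).val) = eK I₃ ((k.val:ℤ) * u.val) * eK I₃ ((k.val:ℤ) * s.val) := by
    rw [← eK_add]
    apply eK_congr
    have hm : (((u + s : Fin I₃).val : ℤ)) % I₃ = (((u.val : ℤ) + s.val)) % I₃ := fin_val_add_mod I₃ u s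
    have : ((k.val:ℤ) * ((u + s : Fin I₃).val : ℤ)) % I₃ = ((k.val:ℤ) * ((u.val : ℤ) + s.val)) % I₃ :=
      Int.ModEq.mul_left (k.val:ℤ) hm
    simpa [Equiv.coe_addRight, mul_add] using this
  rw [h1, h2]
  ring

lemma dft_neg_k [NeZero I₃] (A : Tensor I₁ I₂ I₃) (i : Fin I₁) (j : Fin I₂) (k : Fin I₃) :
    dft A i j (-k) = (starRingEnd ℂ) (dft A i j k) := by
  rw [dft_apply, dft_apply, map_sum]
  refine Finset.sum_congr rfl fun t _ => ?_
  rw [_root_.map_mul, Complex.conj_ofReal, eK_conj]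
  congr 1
  apply eK_congr
  have hm := fin_val_neg_mod I₃ k
  have := Int.ModEq.mul_right (t.val : ℤ) (hm : Int.ModEq (I₃:ℤ) _ _)
  simpa [neg_mul, Int.ModEq] using this

lemma dft_tT [NeZero I₃] (A : Tensor I₁ I₂ I₃) (j : Fin I₂) (i : Fin I₁) (k : Fin I₃) :
    dft (tT A) j i k = (starRingEnd ℂ) (dft A i j k) := by
  rw [dft_apply, dft_apply, map_sum]
  rw [← Equiv.sum_comp (Equiv.neg (Fin I₃)) (fun t => ((tT A) j i t : ℂ) * eK I₃ ((k.val:ℤ) * t.val))]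
  refine Finset.sum_congr rfl fun t _ => ?_
  have h1 : (tT A) j i ((Equiv.neg (Fin I₃)) t) = A i j t := by
    simp [tT, Equiv.neg_apply]
  rw [h1, _root_.map_mul, Complex.conj_ofReal, eK_conj]
  congr 1
  apply eK_congr
  have hm := fin_val_neg_mod I₃ t
  have := Int.ModEq.mul_left (k.val : ℤ) (hm : Int.ModEq (I₃:ℤ) _ _)
  simpa [Equiv.neg_apply, mul_neg, Int.ModEq] using this

lemma dft_idT [NeZero I₃] (i j : Fin R) (k : Fin I₃) :
    dft (idT R I₃) i j k = if i = j then 1 else 0 := by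
  rw [dft_apply]
  rw [Finset.sum_eq_single (0 : Fin I₃)]
  · simp [idT, eK_zero, apply_ite Complex.ofReal]
  · intro t _ ht
    have : ¬ (i = j ∧ (t.val : ℕ) = 0) := by
      rintro ⟨-, h0⟩
      exact ht (Fin.ext h0)
    simp [idT, this, ht]
  · intro h
    exact absurd (Finset.mem_univ _) h

end AuxDFT

section AuxParseval
open Complex RTPCA

variable {I₁ I₂ I₃ J R : ℕ}


lemma nat_eq_of_dvd_sub (n : ℕ) [NeZero n] {a b : ℕ} (ha : a < n) (hb : b < n)
    (hd : (n:ℤ) ∣ (a:ℤ) - b) : a = b := by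
  obtain ⟨q, hq⟩ := hd
  have h1 : |(a:ℤ) - b| < n := by rw [abs_lt]; omega
  rw [hq, abs_mul, Nat.abs_cast] at h1
  have hn : 0 < (n:ℤ) := by exact_mod_cast Nat.pos_of_ne_zero (NeZero.ne n)
  have h2 : |q| < 1 := by nlinarith [abs_nonneg q]
  have h3 : q = 0 := Int.abs_lt_one_iff.mp h2
  rw [h3, mul_zero] at hq
  omega

lemma eK_ortho_fin [NeZero I₃] (t s : Fin I₃) :
    ∑ k : Fin I₃, eK I₃ ((k.val : ℤ) * t.val) * (starRingEnd ℂ) (eK I₃ ((k.val : ℤ) * s.val))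
      = if t = s then (I₃ : ℂ) else 0 := by
  have h1 : ∀ k : Fin I₃, eK I₃ ((k.val : ℤ) * t.val) * (starRingEnd ℂ) (eK I₃ ((k.val : ℤ) * s.val))
      = eK I₃ (((t.val : ℤ) - s.val) * k.val) := by
    intro k
    rw [eK_conj, ← eK_add]
    congr 1
    ring
  rw [Finset.sum_congr rfl fun k _ => h1 k, eK_sum]
  have h2 : ((I₃:ℤ) ∣ (t.val : ℤ) - s.val) ↔ t = s := by
    constructor
    · intro hd
      exact Fin.ext (nat_eq_of_dvd_sub I₃ t.isLt s.isLt hd)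
    · rintro rfl; simp
  simp only [h2]

lemma eK_ortho_fin' [NeZero I₃] (k k' : Fin I₃) :
    ∑ t : Fin I₃, (starRingEnd ℂ) (eK I₃ ((k'.val : ℤ) * t.val)) * eK I₃ ((k.val : ℤ) * t.val)
      = if k' = k then (I₃ : ℂ) else 0 := by
  have h1 : ∀ t : Fin I₃, (starRingEnd ℂ) (eK I₃ ((k'.val : ℤ) * t.val)) * eK I₃ ((k.val : ℤ) * t.val)
      = eK I₃ (((k.val : ℤ) - k'.val) * t.val) := by
    intro t
    rw [eK_conj, ← eK_add]
    congr 1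
    ring
  rw [Finset.sum_congr rfl fun t _ => h1 t, eK_sum]
  have h2 : ((I₃:ℤ) ∣ (k.val : ℤ) - k'.val) ↔ k' = k := by
    constructor
    · intro hd
      exact (Fin.ext (nat_eq_of_dvd_sub I₃ k.isLt k'.isLt hd)).symm
    · rintro rfl; simp
  simp only [h2]

lemma parseval_ij [NeZero I₃] (A : Tensor I₁ I₂ I₃) (i : Fin I₁) (j : Fin I₂) :
    ∑ k : Fin I₃, Complex.normSq (dft A i j k) = I₃ * ∑ t : Fin I₃, (A i j t)^2 := by
  have hC : ∑ k : Fin I₃, (Complex.normSq (dft A i j k) : ℂ) = (I₃ : ℂ) * ∑ t : Fin I₃, ((A i j t : ℂ))^2 := by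
    have h0 : ∀ k, (Complex.normSq (dft A i j k) : ℂ) = dft A i j k * (starRingEnd ℂ) (dft A i j k) :=
      fun k => (Complex.mul_conj _).symm
    rw [Finset.sum_congr rfl fun k _ => h0 k]
    have h1 : ∀ k : Fin I₃, dft A i j k * (starRingEnd ℂ) (dft A i j k)
        = ∑ t : Fin I₃, ∑ s : Fin I₃, ((A i j t : ℂ) * (A i j s : ℂ)) *
            (eK I₃ ((k.val : ℤ) * t.val) * (starRingEnd ℂ) (eK I₃ ((k.val : ℤ) * s.val))) := by
      intro k
      rw [dft_apply, map_sum, Finset.sum_mul_sum]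
      refine Finset.sum_congr rfl fun t _ => Finset.sum_congr rfl fun s _ => ?_
      rw [_root_.map_mul, Complex.conj_ofReal]
      ring
    rw [Finset.sum_congr rfl fun k _ => h1 k]
    rw [Finset.sum_comm]
    have h2 : ∀ t : Fin I₃, (∑ k : Fin I₃, ∑ s : Fin I₃, ((A i j t : ℂ) * (A i j s : ℂ)) *
        (eK I₃ ((k.val : ℤ) * t.val) * (starRingEnd ℂ) (eK I₃ ((k.val : ℤ) * s.val))))
        = (I₃ : ℂ) * ((A i j t : ℂ))^2 := by
      intro t
      rw [Finset.sum_comm]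
      have h3 : ∀ s : Fin I₃, (∑ k : Fin I₃, ((A i j t : ℂ) * (A i j s : ℂ)) *
          (eK I₃ ((k.val : ℤ) * t.val) * (starRingEnd ℂ) (eK I₃ ((k.val : ℤ) * s.val))))
          = ((A i j t : ℂ) * (A i j s : ℂ)) * (if t = s then (I₃:ℂ) else 0) := by
        intro s
        rw [← Finset.mul_sum, eK_ortho_fin]
      rw [Finset.sum_congr rfl fun s _ => h3 s]
      rw [Finset.sum_eq_single t]
      · simp; ring
      · intro s _ hs
        simp [Ne.symm hs]
      · intro h; exact absurd (Finset.mem_univ _) h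
    rw [Finset.sum_congr rfl fun t _ => h2 t, ← Finset.mul_sum]
  have := hC
  exact_mod_cast this

lemma parseval [NeZero I₃] (A : Tensor I₁ I₂ I₃) :
    ∑ i, ∑ j, ∑ k, Complex.normSq (dft A i j k) = I₃ * fro2 A := by
  rw [fro2, Finset.mul_sum]
  refine Finset.sum_congr rfl fun i _ => ?_
  rw [Finset.mul_sum]
  exact Finset.sum_congr rfl fun j _ => parseval_ij A i j

end AuxParseval

section AuxInv
open Complex RTPCA

variable {I₁ I₂ I₃ J R : ℕ}

lemma dft_invDft [NeZero I₃] (F : Fin I₁ → Fin I₂ → Fin I₃ → ℂ)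
    (hsym : ∀ i j k, F i j (-k) = (starRingEnd ℂ) (F i j k))
    (i : Fin I₁) (j : Fin I₂) (k : Fin I₃) :
    dft (invDft F) i j k = F i j k := by
  have hIc : ((I₃:ℕ):ℂ) ≠ 0 := Nat.cast_ne_zero.mpr (NeZero.ne I₃)
  set g : Fin I₃ → ℂ := fun t => ∑ k' : Fin I₃, F i j k' * eK I₃ (-((k'.val : ℤ) * t.val)) with hg
  have hexp : ∀ (k' t : Fin I₃),
      Complex.exp ((2 * Real.pi * Complex.I * (k'.val : ℂ) * (t.val : ℂ)) / (I₃ : ℂ))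
        = eK I₃ (-((k'.val : ℤ) * t.val)) := by
    intro k' t
    rw [eK]
    congr 1
    push_cast
    ring
  have hreal : ∀ t, (starRingEnd ℂ) (g t) = g t := by
    intro t
    have hgt : g t = ∑ k' : Fin I₃, F i j k' * eK I₃ (-((k'.val:ℤ) * t.val)) := rfl
    rw [hgt, map_sum,
      ← Equiv.sum_comp (Equiv.neg (Fin I₃)) (fun k' : Fin I₃ => F i j k' * eK I₃ (-((k'.val:ℤ) * t.val)))]
    refine Finset.sum_congr rfl fun k' _ => ?_
    simp only [Equiv.neg_apply]
    rw [_root_.map_mul, hsym i j k', eK_conj, neg_neg]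
    congr 1
    apply eK_congr
    have hm := fin_val_neg_mod I₃ k'
    have h2 := Int.ModEq.mul_right (t.val : ℤ) (hm : Int.ModEq (I₃:ℤ) _ _)
    have h3 := Int.ModEq.neg h2
    have h4 : (-(-(k'.val:ℤ) * t.val)) = (k'.val:ℤ) * t.val := by ring
    rw [h4] at h3
    exact h3.symm
  have hcast : ∀ t, ((invDft F i j t : ℝ) : ℂ) = g t / I₃ := by
    intro t
    have h1 : invDft F i j t = (g t / (I₃:ℂ)).re := by
      rw [invDft]
      congr 2
      exact Finset.sum_congr rfl fun k' _ => by rw [hexp]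
    have hrealdiv : (starRingEnd ℂ) (g t / (I₃:ℂ)) = g t / (I₃:ℂ) := by
      rw [map_div₀, hreal, map_natCast]
    rw [h1]
    exact Complex.conj_eq_iff_re.mp hrealdiv
  rw [dft_apply, Finset.sum_congr rfl fun t _ => by rw [hcast t]]
  have hterm : ∀ t : Fin I₃, g t / (I₃:ℂ) * eK I₃ ((k.val:ℤ) * t.val)
      = ∑ k' : Fin I₃, F i j k' * (eK I₃ (-((k'.val:ℤ) * t.val)) * eK I₃ ((k.val:ℤ) * t.val)) / I₃ := by
    intro t
    have hgt : g t = ∑ k' : Fin I₃, F i j k' * eK I₃ (-((k'.val:ℤ) * t.val)) := rfl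
    rw [hgt, Finset.sum_div, Finset.sum_mul]
    refine Finset.sum_congr rfl fun k' _ => ?_
    ring
  rw [Finset.sum_congr rfl fun t _ => hterm t, Finset.sum_comm]
  have hcol : ∀ k' : Fin I₃,
      (∑ t : Fin I₃, F i j k' * (eK I₃ (-((k'.val:ℤ) * t.val)) * eK I₃ ((k.val:ℤ) * t.val)) / I₃)
      = F i j k' * (if k' = k then (I₃:ℂ) else 0) / I₃ := by
    intro k'
    rw [← Finset.sum_div, ← Finset.mul_sum]
    congr 2
    rw [← eK_ortho_fin' k k']
    refine Finset.sum_congr rfl fun t _ => ?_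
    rw [eK_conj]
  rw [Finset.sum_congr rfl fun k' _ => hcol k']
  rw [Finset.sum_eq_single k]
  · rw [if_pos rfl, mul_div_assoc, div_self hIc, mul_one]
  · intro k' _ hk
    rw [if_neg hk]
    simp
  · intro h; exact absurd (Finset.mem_univ _) h
end AuxInv

section AuxMore
open Complex RTPCA

variable {I₁ I₂ I₃ J R : ℕ}

lemma dft_sqrtT [NeZero I₃] (S : Tensor R R I₃) (i j : Fin R) (k : Fin I₃) :
    dft (sqrtT S) i j k = ((Real.sqrt ((dft S i j k).re) : ℝ) : ℂ) := by
  rw [sqrtT]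
  refine dft_invDft _ (fun i j k => ?_) i j k
  rw [dft_neg_k]
  simp

lemma dft_inj [NeZero I₃] (A B : Tensor I₁ I₂ I₃)
    (h : ∀ i j k, dft A i j k = dft B i j k) : A = B := by
  funext i j t
  have h1 : ∀ k, dft (A - B) i j k = 0 := by
    intro k
    rw [dft_sub, h, sub_self]
  have h2 := parseval_ij (A - B) i j
  simp only [h1, Complex.normSq_zero, Finset.sum_const_zero] at h2
  have hI : (0:ℝ) < I₃ := by exact_mod_cast Nat.pos_of_ne_zero (NeZero.ne I₃)
  have h3 : ∑ s : Fin I₃, ((A - B) i j s)^2 = 0 := by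
    have := h2.symm
    nlinarith [Finset.sum_nonneg (fun s (_ : s ∈ Finset.univ) => sq_nonneg ((A - B) i j s))]
  have h4 := (Finset.sum_eq_zero_iff_of_nonneg
    (fun s (_ : s ∈ Finset.univ) => sq_nonneg ((A - B) i j s))).mp h3 t (Finset.mem_univ t)
  have h5 : (A - B) i j t = 0 := by nlinarith
  have : A i j t - B i j t = 0 := h5
  linarith

lemma fro2_nonneg (A : Tensor I₁ I₂ I₃) : 0 ≤ fro2 A := by
  refine Finset.sum_nonneg fun i _ => Finset.sum_nonneg fun j _ => Finset.sum_nonneg fun k _ => sq_nonneg _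

lemma froNorm_nonneg (A : Tensor I₁ I₂ I₃) : 0 ≤ froNorm A := Real.sqrt_nonneg _

lemma froNorm_sq (A : Tensor I₁ I₂ I₃) : froNorm A ^ 2 = fro2 A := Real.sq_sqrt (fro2_nonneg A)

lemma froNorm_eq_norm (A : Tensor I₁ I₂ I₃) :
    froNorm A = ‖(show EuclideanSpace ℝ (Fin I₁ × Fin I₂ × Fin I₃) from
      WithLp.toLp 2 (fun p : Fin I₁ × Fin I₂ × Fin I₃ => A p.1 p.2.1 p.2.2))‖ := by
  rw [EuclideanSpace.norm_eq, froNorm, fro2]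
  congr 1
  rw [Fintype.sum_prod_type]
  refine Finset.sum_congr rfl fun i _ => ?_
  rw [Fintype.sum_prod_type]
  refine Finset.sum_congr rfl fun j _ => Finset.sum_congr rfl fun k _ => ?_
  simp [Real.norm_eq_abs, sq_abs]

lemma froNorm_add_le (A B : Tensor I₁ I₂ I₃) : froNorm (A + B) ≤ froNorm A + froNorm B := by
  rw [froNorm_eq_norm A, froNorm_eq_norm B, froNorm_eq_norm (A + B)]
  exact norm_add_le (show EuclideanSpace ℝ (Fin I₁ × Fin I₂ × Fin I₃) from WithLp.toLp 2 (fun p : Fin I₁ × Fin I₂ × Fin I₃ => A p.1 p.2.1 p.2.2))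
    (show EuclideanSpace ℝ (Fin I₁ × Fin I₂ × Fin I₃) from WithLp.toLp 2 (fun p : Fin I₁ × Fin I₂ × Fin I₃ => B p.1 p.2.1 p.2.2))

lemma froNorm_add3_le (A B C : Tensor I₁ I₂ I₃) :
    froNorm (A + B + C) ≤ froNorm A + froNorm B + froNorm C :=
  le_trans (froNorm_add_le (A + B) C) (by linarith [froNorm_add_le A B])

lemma tprod_idT_right [NeZero I₃] (A : Tensor I₁ R I₃) : tprod A (idT R I₃) = A := by
  funext i j k
  have h : tprod A (idT R I₃) i j k
      = ∑ l : Fin R, ∑ t : Fin I₃, A i l t * (if l = j ∧ (k - t : Fin I₃).val = 0 then 1 else 0) := rfl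
  rw [h]
  rw [Finset.sum_eq_single j]
  · rw [Finset.sum_eq_single k]
    · simp
    · intro t _ ht
      have : ¬ ((j : Fin R) = j ∧ (k - t : Fin I₃).val = 0) := by
        rintro ⟨-, h0⟩
        have : (k - t : Fin I₃) = 0 := Fin.ext h0
        have : k = t := by
          have := sub_eq_zero.mp this
          exact this
        exact ht this.symm
      rw [if_neg this, mul_zero]
    · intro h; exact absurd (Finset.mem_univ _) h
  · intro l _ hl
    refine Finset.sum_eq_zero fun t _ => ?_
    rw [if_neg (by rintro ⟨h0, -⟩; exact hl h0), mul_zero]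
  · intro h; exact absurd (Finset.mem_univ _) h

lemma TInv_idT [NeZero I₃] : TInv (idT R I₃) (idT R I₃) :=
  ⟨tprod_idT_right _, tprod_idT_right _⟩

lemma normSq_inner_le (w u : Fin R → ℂ) (τ : Fin R → ℝ) (hτ : ∀ r, 0 ≤ τ r) :
    Complex.normSq (∑ r, w r * (starRingEnd ℂ) (u r) * (τ r : ℂ))
      ≤ (∑ r, Complex.normSq (w r) * τ r) * (∑ r, Complex.normSq (u r) * τ r) := by
  have h1 : ‖∑ r, w r * (starRingEnd ℂ) (u r) * (τ r : ℂ)‖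
      ≤ ∑ r, ‖w r‖ * ‖u r‖ * τ r := by
    refine le_trans (norm_sum_le _ _) (Finset.sum_le_sum fun r _ => ?_)
    rw [norm_mul, norm_mul,
      Complex.norm_conj, Complex.norm_real, Real.norm_eq_abs, _root_.abs_of_nonneg (hτ r)]
  have h2 : (∑ r, ‖w r‖ * ‖u r‖ * τ r)^2
      ≤ (∑ r, (‖w r‖ * Real.sqrt (τ r))^2) * (∑ r, (‖u r‖ * Real.sqrt (τ r))^2) := by
    have := Finset.sum_mul_sq_le_sq_mul_sq Finset.univ
      (fun r => ‖w r‖ * Real.sqrt (τ r)) (fun r => ‖u r‖ * Real.sqrt (τ r))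
    calc (∑ r, ‖w r‖ * ‖u r‖ * τ r)^2
        = (∑ r, (‖w r‖ * Real.sqrt (τ r)) * (‖u r‖ * Real.sqrt (τ r)))^2 := by
          congr 1
          refine Finset.sum_congr rfl fun r _ => ?_
          rw [show ‖w r‖ * Real.sqrt (τ r) * (‖u r‖ * Real.sqrt (τ r))
            = ‖w r‖ * ‖u r‖ * (Real.sqrt (τ r) * Real.sqrt (τ r)) by ring,
            Real.mul_self_sqrt (hτ r)]
      _ ≤ _ := this
  have h3 : ∀ r, (‖w r‖ * Real.sqrt (τ r))^2 = Complex.normSq (w r) * τ r := by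
    intro r
    rw [mul_pow, Real.sq_sqrt (hτ r), Complex.sq_norm]
  have h4 : ∀ r, (‖u r‖ * Real.sqrt (τ r))^2 = Complex.normSq (u r) * τ r := by
    intro r
    rw [mul_pow, Real.sq_sqrt (hτ r), Complex.sq_norm]
  calc Complex.normSq (∑ r, w r * (starRingEnd ℂ) (u r) * (τ r : ℂ))
      = ‖∑ r, w r * (starRingEnd ℂ) (u r) * (τ r : ℂ)‖^2 := Complex.sq_norm _ |>.symm
    _ ≤ (∑ r, ‖w r‖ * ‖u r‖ * τ r)^2 := by
        exact pow_le_pow_left₀ (norm_nonneg _) h1 2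
    _ ≤ (∑ r, (‖w r‖ * Real.sqrt (τ r))^2) * (∑ r, (‖u r‖ * Real.sqrt (τ r))^2) := h2
    _ = _ := by rw [Finset.sum_congr rfl fun r _ => h3 r, Finset.sum_congr rfl fun r _ => h4 r]

end AuxMore

section AuxOrtho
open Complex RTPCA

lemma sum3_comm {α β γ : Type*} [Fintype α] [Fintype β] [Fintype γ] (f : α → β → γ → ℝ) :
    ∑ i, ∑ j, ∑ k, f i j k = ∑ k, ∑ i, ∑ j, f i j k := by
  have h1 : ∀ i : α, ∑ j, ∑ k, f i j k = ∑ k, ∑ j, f i j k := fun i => Finset.sum_comm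
  rw [Finset.sum_congr rfl fun i _ => h1 i]
  exact Finset.sum_comm

lemma ortho_collapse {N R : ℕ} (f : Fin N → Fin R → ℂ) (w : Fin R → ℂ)
    (hf : ∀ r r', (∑ j, (starRingEnd ℂ) (f j r) * f j r') = if r = r' then 1 else 0) :
    ∑ j, Complex.normSq (∑ r, w r * (starRingEnd ℂ) (f j r)) = ∑ r, Complex.normSq (w r) := by
  have hC : ∑ j, ((Complex.normSq (∑ r, w r * (starRingEnd ℂ) (f j r)) : ℂ))
      = ∑ r, (Complex.normSq (w r) : ℂ) := by
    have h0 : ∀ j, ((Complex.normSq (∑ r, w r * (starRingEnd ℂ) (f j r)) : ℂ))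
        = (∑ r, w r * (starRingEnd ℂ) (f j r)) * (starRingEnd ℂ) (∑ r', w r' * (starRingEnd ℂ) (f j r')) :=
      fun j => (Complex.mul_conj _).symm
    rw [Finset.sum_congr rfl fun j _ => h0 j]
    have h1 : ∀ j, (∑ r, w r * (starRingEnd ℂ) (f j r)) * (starRingEnd ℂ) (∑ r', w r' * (starRingEnd ℂ) (f j r'))
        = ∑ r, ∑ r', (w r * (starRingEnd ℂ) (w r')) * ((starRingEnd ℂ) (f j r) * f j r') := by
      intro j
      rw [map_sum, Finset.sum_mul_sum]
      refine Finset.sum_congr rfl fun r _ => Finset.sum_congr rfl fun r' _ => ?_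
      rw [_root_.map_mul, Complex.conj_conj]
      ring
    rw [Finset.sum_congr rfl fun j _ => h1 j, Finset.sum_comm]
    have h2 : ∀ r, (∑ j, ∑ r', (w r * (starRingEnd ℂ) (w r')) * ((starRingEnd ℂ) (f j r) * f j r'))
        = (Complex.normSq (w r) : ℂ) := by
      intro r
      rw [Finset.sum_comm]
      have h3 : ∀ r', (∑ j, (w r * (starRingEnd ℂ) (w r')) * ((starRingEnd ℂ) (f j r) * f j r'))
          = (w r * (starRingEnd ℂ) (w r')) * (if r = r' then 1 else 0) := by
        intro r'
        rw [← Finset.mul_sum, hf r r']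
      rw [Finset.sum_congr rfl fun r' _ => h3 r']
      rw [Finset.sum_eq_single r]
      · rw [if_pos rfl, mul_one, Complex.mul_conj]
      · intro r' _ hr; rw [if_neg (Ne.symm hr), mul_zero]
      · intro h; exact absurd (Finset.mem_univ _) h
    rw [Finset.sum_congr rfl fun r _ => h2 r]
  exact_mod_cast hC

lemma ortho_collapse_left {N R : ℕ} (f : Fin N → Fin R → ℂ) (w : Fin R → ℂ)
    (hf : ∀ r r', (∑ i, (starRingEnd ℂ) (f i r) * f i r') = if r = r' then 1 else 0) :
    ∑ i, Complex.normSq (∑ r, f i r * (starRingEnd ℂ) (w r)) = ∑ r, Complex.normSq (w r) := by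
  have key : ∀ i, Complex.normSq (∑ r, f i r * (starRingEnd ℂ) (w r))
      = Complex.normSq (∑ r, w r * (starRingEnd ℂ) (f i r)) := by
    intro i
    rw [← Complex.normSq_conj, map_sum]
    congr 1
    refine Finset.sum_congr rfl fun r _ => ?_
    rw [_root_.map_mul, Complex.conj_conj]
    ring
  rw [Finset.sum_congr rfl fun i _ => key i]
  exact ortho_collapse f w hf

end AuxOrtho

section AuxHat
open Complex RTPCA

variable {I₁ I₂ I₃ J R : ℕ}

lemma hat_cancel [NeZero I₃] (Lk : Tensor I₁ R I₃) (Rk : Tensor I₂ R I₃) (Q Qi : Tensor R R I₃)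
    (hQd : ∀ a b (k : Fin I₃), ∑ r, dft Q a r k * dft Qi r b k = if a = b then 1 else 0)
    (i : Fin I₁) (j : Fin I₂) (k : Fin I₃) :
    ∑ r, dft (tprod Lk Q) i r k * (starRingEnd ℂ) (dft (tprod Rk (tT Qi)) j r k)
      = ∑ a, dft Lk i a k * (starRingEnd ℂ) (dft Rk j a k) := by
  have h1 : ∀ r, dft (tprod Lk Q) i r k * (starRingEnd ℂ) (dft (tprod Rk (tT Qi)) j r k)
      = ∑ a, ∑ b, (dft Lk i a k * (starRingEnd ℂ) (dft Rk j b k)) * (dft Q a r k * dft Qi r b k) := by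
    intro r
    rw [dft_tprod, dft_tprod, map_sum, Finset.sum_mul_sum]
    refine Finset.sum_congr rfl fun a _ => Finset.sum_congr rfl fun b _ => ?_
    rw [_root_.map_mul, dft_tT, Complex.conj_conj]
    ring
  rw [Finset.sum_congr rfl fun r _ => h1 r, Finset.sum_comm]
  refine Finset.sum_congr rfl fun a _ => ?_
  rw [Finset.sum_comm]
  have h2 : ∀ b, (∑ r, (dft Lk i a k * (starRingEnd ℂ) (dft Rk j b k)) * (dft Q a r k * dft Qi r b k))
      = (dft Lk i a k * (starRingEnd ℂ) (dft Rk j b k)) * (if a = b then 1 else 0) := by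
    intro b
    rw [← Finset.mul_sum, hQd a b k]
  rw [Finset.sum_congr rfl fun b _ => h2 b]
  rw [Finset.sum_eq_single a]
  · rw [if_pos rfl, mul_one]
  · intro b _ hb; rw [if_neg (Ne.symm hb), mul_zero]
  · intro h; exact absurd (Finset.mem_univ _) h

lemma hat_mul_diag [NeZero I₃] (A : Tensor I₁ R I₃) (D : Tensor R R I₃) (d : Fin I₃ → Fin R → ℂ)
    (hD : ∀ a b (k : Fin I₃), dft D a b k = if a = b then d k b else 0)
    (i : Fin I₁) (r : Fin R) (k : Fin I₃) :
    dft (tprod A D) i r k = dft A i r k * d k r := by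
  rw [dft_tprod]
  rw [Finset.sum_eq_single r]
  · rw [hD r r k, if_pos rfl]
  · intro b _ hb; rw [hD b r k, if_neg hb, mul_zero]
  · intro h; exact absurd (Finset.mem_univ _) h

end AuxHat

section AuxDecomp
open Complex RTPCA

variable {I₁ I₂ I₃ J R : ℕ}

lemma hat_diag_S (Sig : Tensor R R I₃) (hdiag : FDiagPos Sig) :
    ∀ a b (k : Fin I₃), dft Sig a b k = if a = b then (((dft Sig b b k).re : ℝ) : ℂ) else 0 := by
  intro a b k
  by_cases h : a = b
  · subst h
    rw [if_pos rfl]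
    have him : (dft Sig a a k).im = 0 := (hdiag.2 k a).2
    apply Complex.ext <;> simp [him]
  · rw [if_neg h]
    exact hdiag.1 k a b h

lemma hat_diag_Sh [NeZero I₃] (Sig : Tensor R R I₃) (hdiag : FDiagPos Sig) :
    ∀ a b (k : Fin I₃), dft (sqrtT Sig) a b k
      = if a = b then ((Real.sqrt ((dft Sig b b k).re) : ℝ) : ℂ) else 0 := by
  intro a b k
  rw [dft_sqrtT, hat_diag_S Sig hdiag a b k]
  by_cases h : a = b
  · subst h; simp
  · simp [h]

lemma hQd_of_TInv [NeZero I₃] (Q Qi : Tensor R R I₃) (hQ : TInv Q Qi) :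
    ∀ a b (k : Fin I₃), ∑ r, dft Q a r k * dft Qi r b k = if a = b then 1 else 0 := by
  intro a b k
  have h := congrArg (fun T => dft T a b k) hQ.1
  rw [dft_tprod] at h
  rw [h, dft_idT]

lemma hortho_of_eq_idT [NeZero I₃] {N : ℕ} (V : Tensor N R I₃)
    (h : tprod (tT V) V = idT R I₃) :
    ∀ r r' (k : Fin I₃), ∑ j, (starRingEnd ℂ) (dft V j r k) * dft V j r' k = if r = r' then 1 else 0 := by
  intro r r' k
  have h2 := congrArg (fun T => dft T r r' k) h
  rw [dft_tprod, dft_idT] at h2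
  rw [← h2]
  exact Finset.sum_congr rfl fun j _ => by rw [dft_tT]

lemma tensor_decomp [NeZero I₃]
    (Xs : Tensor I₁ I₂ I₃) (Us : Tensor I₁ R I₃) (Sig : Tensor R R I₃) (Vs : Tensor I₂ R I₃)
    (hsvd : IsSkinnyTSVD Xs Us Sig Vs)
    (Lk : Tensor I₁ R I₃) (Rk : Tensor I₂ R I₃) (Q Qi : Tensor R R I₃) (hQ : TInv Q Qi) :
    tprod Lk (tT Rk) - Xs =
      tprod (tprod Lk Q - tprod Us (sqrtT Sig)) (tT (tprod Vs (sqrtT Sig)))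
      + tprod (tprod Us (sqrtT Sig)) (tT (tprod Rk (tT Qi) - tprod Vs (sqrtT Sig)))
      + tprod (tprod Lk Q - tprod Us (sqrtT Sig)) (tT (tprod Rk (tT Qi) - tprod Vs (sqrtT Sig))) := by
  have hσ : ∀ (k : Fin I₃) (r : Fin R), 0 ≤ (dft Sig r r k).re :=
    fun k r => le_of_lt (hsvd.diag.2 k r).1
  have hfS := hat_diag_S Sig hsvd.diag
  have hfSh := hat_diag_Sh Sig hsvd.diag
  have hQd := hQd_of_TInv Q Qi hQ
  apply dft_inj
  intro i j k
  have hLs : ∀ (i : Fin I₁) (r : Fin R) (k : Fin I₃),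
      dft (tprod Us (sqrtT Sig)) i r k = dft Us i r k * ((Real.sqrt ((dft Sig r r k).re) : ℝ) : ℂ) :=
    fun i r k => hat_mul_diag Us (sqrtT Sig) (fun k b => ((Real.sqrt ((dft Sig b b k).re) : ℝ) : ℂ)) hfSh i r k
  have hRs : ∀ (j : Fin I₂) (r : Fin R) (k : Fin I₃),
      dft (tprod Vs (sqrtT Sig)) j r k = dft Vs j r k * ((Real.sqrt ((dft Sig r r k).re) : ℝ) : ℂ) :=
    fun j r k => hat_mul_diag Vs (sqrtT Sig) (fun k b => ((Real.sqrt ((dft Sig b b k).re) : ℝ) : ℂ)) hfSh j r k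
  have hXs : dft Xs i j k
      = ∑ r, dft Us i r k * (((dft Sig r r k).re : ℝ) : ℂ) * (starRingEnd ℂ) (dft Vs j r k) := by
    rw [hsvd.decomp, dft_tprod]
    refine Finset.sum_congr rfl fun r _ => ?_
    rw [dft_tT, hat_mul_diag Us Sig (fun k b => (((dft Sig b b k).re : ℝ) : ℂ)) hfS]
  have hL : dft (tprod Lk (tT Rk)) i j k
      = ∑ r, dft (tprod Lk Q) i r k * (starRingEnd ℂ) (dft (tprod Rk (tT Qi)) j r k) := by
    rw [dft_tprod]
    have e1 : ∀ a : Fin R, dft Lk i a k * dft (tT Rk) a j k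
        = dft Lk i a k * (starRingEnd ℂ) (dft Rk j a k) := fun a => by rw [dft_tT]
    rw [Finset.sum_congr rfl fun a _ => e1 a]
    exact (hat_cancel Lk Rk Q Qi hQd i j k).symm
  rw [dft_sub, dft_add, dft_add, hL, hXs]
  have hT1 : dft (tprod (tprod Lk Q - tprod Us (sqrtT Sig)) (tT (tprod Vs (sqrtT Sig)))) i j k
      = ∑ r, (dft (tprod Lk Q) i r k - dft (tprod Us (sqrtT Sig)) i r k)
          * (starRingEnd ℂ) (dft (tprod Vs (sqrtT Sig)) j r k) := by
    rw [dft_tprod]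
    exact Finset.sum_congr rfl fun r _ => by rw [dft_tT, dft_sub]
  have hT2 : dft (tprod (tprod Us (sqrtT Sig)) (tT (tprod Rk (tT Qi) - tprod Vs (sqrtT Sig)))) i j k
      = ∑ r, dft (tprod Us (sqrtT Sig)) i r k
          * (starRingEnd ℂ) (dft (tprod Rk (tT Qi)) j r k - dft (tprod Vs (sqrtT Sig)) j r k) := by
    rw [dft_tprod]
    exact Finset.sum_congr rfl fun r _ => by rw [dft_tT, dft_sub]
  have hT3 : dft (tprod (tprod Lk Q - tprod Us (sqrtT Sig)) (tT (tprod Rk (tT Qi) - tprod Vs (sqrtT Sig)))) i j k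
      = ∑ r, (dft (tprod Lk Q) i r k - dft (tprod Us (sqrtT Sig)) i r k)
          * (starRingEnd ℂ) (dft (tprod Rk (tT Qi)) j r k - dft (tprod Vs (sqrtT Sig)) j r k) := by
    rw [dft_tprod]
    exact Finset.sum_congr rfl fun r _ => by rw [dft_tT, dft_sub, dft_sub]
  rw [hT1, hT2, hT3]
  rw [← Finset.sum_add_distrib, ← Finset.sum_add_distrib, ← Finset.sum_sub_distrib]
  refine Finset.sum_congr rfl fun r _ => ?_
  rw [hLs, hRs, map_sub, _root_.map_mul, Complex.conj_ofReal]
  have hss : ((Real.sqrt ((dft Sig r r k).re) : ℝ) : ℂ) * ((Real.sqrt ((dft Sig r r k).re) : ℝ) : ℂ)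
      = (((dft Sig r r k).re : ℝ) : ℂ) := by
    rw [← Complex.ofReal_mul, Real.mul_self_sqrt (hσ k r)]
  linear_combination (dft Us i r k * (starRingEnd ℂ) (dft Vs j r k)) * hss

end AuxDecomp

section AuxNorms
open Complex RTPCA

variable {I₁ I₂ I₃ J R : ℕ}

lemma sigmaMin_le (S : Tensor R R I₃) (k : Fin I₃) (i : Fin R) :
    sigmaMin S ≤ (dft S i i k).re := by
  have h1 : sigmaMin S ≤ ⨅ i : Fin R, (fSlice S k i i).re :=
    ciInf_le (Finite.bddBelow_range _) k
  exact h1.trans (ciInf_le (Finite.bddBelow_range _) i)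

lemma sigmaMin_pos [NeZero I₃] [NeZero R] (S : Tensor R R I₃) (hdiag : FDiagPos S) :
    0 < sigmaMin S := by
  obtain ⟨⟨k0, i0⟩, hm⟩ := Finite.exists_min (fun p : Fin I₃ × Fin R => (fSlice S p.1 p.2 p.2).re)
  have h1 : (fSlice S k0 i0 i0).re ≤ sigmaMin S :=
    le_ciInf fun k => le_ciInf fun i => hm (k, i)
  exact lt_of_lt_of_le (hdiag.2 k0 i0).1 h1

lemma fro2_mul_tTRs [NeZero I₃] (E : Tensor I₁ R I₃) (Sig : Tensor R R I₃) (Vs : Tensor I₂ R I₃)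
    (hdiag : FDiagPos Sig) (horthV : tprod (tT Vs) Vs = idT R I₃) :
    fro2 (tprod E (tT (tprod Vs (sqrtT Sig)))) = fro2 (tprod E (sqrtT Sig)) := by
  have hI3 : (0:ℝ) < I₃ := by exact_mod_cast Nat.pos_of_ne_zero (NeZero.ne I₃)
  have hfSh := hat_diag_Sh Sig hdiag
  have hV := hortho_of_eq_idT Vs horthV
  apply mul_left_cancel₀ (ne_of_gt hI3)
  rw [← parseval, ← parseval]
  have hre1 : ∀ i : Fin I₁, ∑ j, ∑ k, normSq (dft (tprod E (tT (tprod Vs (sqrtT Sig)))) i j k)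
      = ∑ k, ∑ j, normSq (dft (tprod E (tT (tprod Vs (sqrtT Sig)))) i j k) :=
    fun i => Finset.sum_comm
  have hre2 : ∀ i : Fin I₁, ∑ r, ∑ k, normSq (dft (tprod E (sqrtT Sig)) i r k)
      = ∑ k, ∑ r, normSq (dft (tprod E (sqrtT Sig)) i r k) :=
    fun i => Finset.sum_comm
  rw [Finset.sum_congr rfl fun i _ => hre1 i, Finset.sum_congr rfl fun i _ => hre2 i]
  refine Finset.sum_congr rfl fun i _ => Finset.sum_congr rfl fun k _ => ?_
  have hform : ∀ j : Fin I₂, dft (tprod E (tT (tprod Vs (sqrtT Sig)))) i j k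
      = ∑ r, (dft (tprod E (sqrtT Sig)) i r k) * (starRingEnd ℂ) (dft Vs j r k) := by
    intro j
    rw [dft_tprod]
    refine Finset.sum_congr rfl fun r _ => ?_
    rw [dft_tT,
      hat_mul_diag Vs (sqrtT Sig) (fun k b => ((Real.sqrt ((dft Sig b b k).re) : ℝ) : ℂ)) hfSh,
      hat_mul_diag E (sqrtT Sig) (fun k b => ((Real.sqrt ((dft Sig b b k).re) : ℝ) : ℂ)) hfSh,
      _root_.map_mul, Complex.conj_ofReal]
    ring
  rw [Finset.sum_congr rfl fun j _ => by rw [hform j]]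
  exact ortho_collapse (fun j r => dft Vs j r k) (fun r => dft (tprod E (sqrtT Sig)) i r k)
    (fun r r' => hV r r' k)

lemma fro2_Ls_mul [NeZero I₃] (F : Tensor I₂ R I₃) (Sig : Tensor R R I₃) (Us : Tensor I₁ R I₃)
    (hdiag : FDiagPos Sig) (horthU : tprod (tT Us) Us = idT R I₃) :
    fro2 (tprod (tprod Us (sqrtT Sig)) (tT F)) = fro2 (tprod F (sqrtT Sig)) := by
  have hI3 : (0:ℝ) < I₃ := by exact_mod_cast Nat.pos_of_ne_zero (NeZero.ne I₃)
  have hfSh := hat_diag_Sh Sig hdiag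
  have hU := hortho_of_eq_idT Us horthU
  apply mul_left_cancel₀ (ne_of_gt hI3)
  rw [← parseval, ← parseval]
  have hre1 : ∑ i, ∑ j, ∑ k, normSq (dft (tprod (tprod Us (sqrtT Sig)) (tT F)) i j k)
      = ∑ j, ∑ k, ∑ i, normSq (dft (tprod (tprod Us (sqrtT Sig)) (tT F)) i j k) := by
    rw [Finset.sum_comm]
    exact Finset.sum_congr rfl fun j _ => Finset.sum_comm
  have hre2 : ∑ j, ∑ r, ∑ k, normSq (dft (tprod F (sqrtT Sig)) j r k)
      = ∑ j, ∑ k, ∑ r, normSq (dft (tprod F (sqrtT Sig)) j r k) :=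
    Finset.sum_congr rfl fun j _ => Finset.sum_comm
  rw [hre1, hre2]
  refine Finset.sum_congr rfl fun j _ => Finset.sum_congr rfl fun k _ => ?_
  have hform : ∀ i : Fin I₁, dft (tprod (tprod Us (sqrtT Sig)) (tT F)) i j k
      = ∑ r, dft Us i r k * (starRingEnd ℂ) (dft (tprod F (sqrtT Sig)) j r k) := by
    intro i
    rw [dft_tprod]
    refine Finset.sum_congr rfl fun r _ => ?_
    rw [dft_tT,
      hat_mul_diag Us (sqrtT Sig) (fun k b => ((Real.sqrt ((dft Sig b b k).re) : ℝ) : ℂ)) hfSh,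
      hat_mul_diag F (sqrtT Sig) (fun k b => ((Real.sqrt ((dft Sig b b k).re) : ℝ) : ℂ)) hfSh,
      _root_.map_mul, Complex.conj_ofReal]
    ring
  rw [Finset.sum_congr rfl fun i _ => by rw [hform i]]
  exact ortho_collapse_left (fun i r => dft Us i r k) (fun r => dft (tprod F (sqrtT Sig)) j r k)
    (fun r r' => hU r r' k)

end AuxNorms

section AuxCross
open Complex RTPCA

variable {I₁ I₂ I₃ J R : ℕ}

lemma fro2_cross_le [NeZero I₃] [NeZero R] (E : Tensor I₁ R I₃) (F : Tensor I₂ R I₃)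
    (Sig : Tensor R R I₃) (hdiag : FDiagPos Sig) :
    fro2 (tprod E (tT F)) ≤
      (I₃:ℝ) * fro2 (tprod E (sqrtT Sig)) * fro2 (tprod F (sqrtT Sig)) * ((sigmaMin Sig)⁻¹)^2 := by
  have hI3 : (0:ℝ) < I₃ := by exact_mod_cast Nat.pos_of_ne_zero (NeZero.ne I₃)
  have hfSh := hat_diag_Sh Sig hdiag
  have hsm := sigmaMin_pos Sig hdiag
  have hσpos : ∀ (k : Fin I₃) (r : Fin R), 0 < (dft Sig r r k).re := fun k r => (hdiag.2 k r).1
  set a2 := fro2 (tprod E (sqrtT Sig)) with ha2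
  set b2 := fro2 (tprod F (sqrtT Sig)) with hb2
  have ha2nn : 0 ≤ a2 := fro2_nonneg _
  have hb2nn : 0 ≤ b2 := fro2_nonneg _
  set X : Fin I₃ → ℝ := fun k => ∑ i, ∑ r, normSq (dft (tprod E (sqrtT Sig)) i r k) with hX
  set Y : Fin I₃ → ℝ := fun k => ∑ j, ∑ r, normSq (dft (tprod F (sqrtT Sig)) j r k) with hY
  have hXnn : ∀ k, 0 ≤ X k := fun k =>
    Finset.sum_nonneg fun i _ => Finset.sum_nonneg fun r _ => Complex.normSq_nonneg _
  have hYnn : ∀ k, 0 ≤ Y k := fun k =>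
    Finset.sum_nonneg fun j _ => Finset.sum_nonneg fun r _ => Complex.normSq_nonneg _
  have hXsum : ∑ k, X k = I₃ * a2 := by
    rw [← parseval]
    exact (sum3_comm _).symm
  have hYsum : ∑ k, Y k = I₃ * b2 := by
    rw [← parseval]
    exact (sum3_comm _).symm
  have hYle : ∀ k, Y k ≤ I₃ * b2 := by
    intro k
    rw [← hYsum]
    exact Finset.single_le_sum (fun k' _ => hYnn k') (Finset.mem_univ k)
  -- pointwise bound
  have hpt : ∀ (k : Fin I₃) (i : Fin I₁) (j : Fin I₂),
      normSq (dft (tprod E (tT F)) i j k)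
        ≤ ((sigmaMin Sig)⁻¹ * ∑ r, normSq (dft (tprod E (sqrtT Sig)) i r k))
          * ((sigmaMin Sig)⁻¹ * ∑ r, normSq (dft (tprod F (sqrtT Sig)) j r k)) := by
    intro k i j
    have hform : dft (tprod E (tT F)) i j k
        = ∑ r, dft (tprod E (sqrtT Sig)) i r k * (starRingEnd ℂ) (dft (tprod F (sqrtT Sig)) j r k)
            * ((((dft Sig r r k).re)⁻¹ : ℝ) : ℂ) := by
      rw [dft_tprod]
      refine Finset.sum_congr rfl fun r _ => ?_
      rw [dft_tT,
        hat_mul_diag E (sqrtT Sig) (fun k b => ((Real.sqrt ((dft Sig b b k).re) : ℝ) : ℂ)) hfSh,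
        hat_mul_diag F (sqrtT Sig) (fun k b => ((Real.sqrt ((dft Sig b b k).re) : ℝ) : ℂ)) hfSh,
        _root_.map_mul, Complex.conj_ofReal]
      have hss : ((Real.sqrt ((dft Sig r r k).re) : ℝ) : ℂ) * ((Real.sqrt ((dft Sig r r k).re) : ℝ) : ℂ)
          = (((dft Sig r r k).re : ℝ) : ℂ) := by
        rw [← Complex.ofReal_mul, Real.mul_self_sqrt (le_of_lt (hσpos k r))]
      have hσne : (((dft Sig r r k).re : ℝ) : ℂ) ≠ 0 := by
        exact_mod_cast Complex.ofReal_ne_zero.mpr (ne_of_gt (hσpos k r))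
      rw [Complex.ofReal_inv]
      have hrearr : dft E i r k * ((Real.sqrt ((dft Sig r r k).re) : ℝ) : ℂ)
          * ((starRingEnd ℂ) (dft F j r k) * ((Real.sqrt ((dft Sig r r k).re) : ℝ) : ℂ))
          * ((((dft Sig r r k).re : ℝ) : ℂ))⁻¹
          = dft E i r k * (starRingEnd ℂ) (dft F j r k)
            * ((((Real.sqrt ((dft Sig r r k).re) : ℝ) : ℂ) * ((Real.sqrt ((dft Sig r r k).re) : ℝ) : ℂ))
              * ((((dft Sig r r k).re : ℝ) : ℂ))⁻¹) := by ring
      rw [hrearr, hss, mul_inv_cancel₀ hσne, mul_one]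
    rw [hform]
    have hCS := normSq_inner_le (fun r => dft (tprod E (sqrtT Sig)) i r k)
      (fun r => dft (tprod F (sqrtT Sig)) j r k)
      (fun r => ((dft Sig r r k).re)⁻¹) (fun r => le_of_lt (inv_pos.mpr (hσpos k r)))
    refine le_trans hCS ?_
    have hwt : ∀ (g : Fin R → ℂ), ∑ r, normSq (g r) * ((dft Sig r r k).re)⁻¹
        ≤ (sigmaMin Sig)⁻¹ * ∑ r, normSq (g r) := by
      intro g
      rw [Finset.mul_sum]
      refine Finset.sum_le_sum fun r _ => ?_
      rw [mul_comm ((sigmaMin Sig)⁻¹)]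
      exact mul_le_mul_of_nonneg_left
        (inv_anti₀ hsm (sigmaMin_le Sig k r)) (Complex.normSq_nonneg _)
    have h1 := hwt (fun r => dft (tprod E (sqrtT Sig)) i r k)
    have h2 := hwt (fun r => dft (tprod F (sqrtT Sig)) j r k)
    have hnn1 : 0 ≤ ∑ r, normSq (dft (tprod E (sqrtT Sig)) i r k) * ((dft Sig r r k).re)⁻¹ :=
      Finset.sum_nonneg fun r _ => mul_nonneg (Complex.normSq_nonneg _) (le_of_lt (inv_pos.mpr (hσpos k r)))
    have hnn2 : 0 ≤ ∑ r, normSq (dft (tprod F (sqrtT Sig)) j r k) * ((dft Sig r r k).re)⁻¹ :=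
      Finset.sum_nonneg fun r _ => mul_nonneg (Complex.normSq_nonneg _) (le_of_lt (inv_pos.mpr (hσpos k r)))
    have hnn3 : 0 ≤ (sigmaMin Sig)⁻¹ * ∑ r, normSq (dft (tprod E (sqrtT Sig)) i r k) :=
      mul_nonneg (le_of_lt (inv_pos.mpr hsm)) (Finset.sum_nonneg fun r _ => Complex.normSq_nonneg _)
    exact mul_le_mul h1 h2 hnn2 hnn3
  -- per slice bound
  have hslice : ∀ k : Fin I₃, ∑ i, ∑ j, normSq (dft (tprod E (tT F)) i j k)
      ≤ ((sigmaMin Sig)⁻¹)^2 * (X k * Y k) := by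
    intro k
    have h1 : ∑ i, ∑ j, normSq (dft (tprod E (tT F)) i j k)
        ≤ ∑ i, ∑ j, ((sigmaMin Sig)⁻¹ * ∑ r, normSq (dft (tprod E (sqrtT Sig)) i r k))
            * ((sigmaMin Sig)⁻¹ * ∑ r, normSq (dft (tprod F (sqrtT Sig)) j r k)) :=
      Finset.sum_le_sum fun i _ => Finset.sum_le_sum fun j _ => hpt k i j
    refine h1.trans (le_of_eq ?_)
    have e1 : ∀ i : Fin I₁,
        (∑ j, ((sigmaMin Sig)⁻¹ * ∑ r, normSq (dft (tprod E (sqrtT Sig)) i r k))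
            * ((sigmaMin Sig)⁻¹ * ∑ r, normSq (dft (tprod F (sqrtT Sig)) j r k)))
        = (((sigmaMin Sig)⁻¹)^2 * ∑ r, normSq (dft (tprod E (sqrtT Sig)) i r k)) * Y k := by
      intro i
      rw [hY]
      simp only []
      rw [Finset.mul_sum Finset.univ
        (fun j => ∑ r, normSq (dft (tprod F (sqrtT Sig)) j r k))
        (((sigmaMin Sig)⁻¹)^2 * ∑ r, normSq (dft (tprod E (sqrtT Sig)) i r k))]
      exact Finset.sum_congr rfl fun j _ => by ring
    rw [Finset.sum_congr rfl fun i _ => e1 i]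
    rw [← Finset.sum_mul, ← Finset.mul_sum]
    rw [hX]
    simp only []
    ring
  have hmain : (I₃:ℝ) * fro2 (tprod E (tT F))
      ≤ ((sigmaMin Sig)⁻¹)^2 * ((∑ k, X k) * ((I₃:ℝ) * b2)) := by
    rw [← parseval, sum3_comm]
    calc ∑ k, ∑ i, ∑ j, normSq (dft (tprod E (tT F)) i j k)
        ≤ ∑ k, ((sigmaMin Sig)⁻¹)^2 * (X k * Y k) := Finset.sum_le_sum fun k _ => hslice k
      _ ≤ ∑ k, ((sigmaMin Sig)⁻¹)^2 * (X k * ((I₃:ℝ) * b2)) := Finset.sum_le_sum fun k _ =>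
          mul_le_mul_of_nonneg_left
            (mul_le_mul_of_nonneg_left (hYle k) (hXnn k)) (sq_nonneg _)
      _ = ((sigmaMin Sig)⁻¹)^2 * ((∑ k, X k) * ((I₃:ℝ) * b2)) := by
          rw [← Finset.mul_sum, ← Finset.sum_mul]
  rw [hXsum] at hmain
  have h2 : (I₃:ℝ) * fro2 (tprod E (tT F))
      ≤ (I₃:ℝ) * ((I₃:ℝ) * a2 * b2 * ((sigmaMin Sig)⁻¹)^2) := by
    calc (I₃:ℝ) * fro2 (tprod E (tT F))
        ≤ ((sigmaMin Sig)⁻¹)^2 * (((I₃:ℝ) * a2) * ((I₃:ℝ) * b2)) := hmain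
      _ = (I₃:ℝ) * ((I₃:ℝ) * a2 * b2 * ((sigmaMin Sig)⁻¹)^2) := by ring
  exact le_of_mul_le_mul_left h2 hI3

end AuxCross

section AuxClaimA
open Complex RTPCA

variable {I₁ I₂ I₃ R : ℕ}

lemma claimA [NeZero I₃] [NeZero R]
    (Xs : Tensor I₁ I₂ I₃) (Us : Tensor I₁ R I₃) (Sig : Tensor R R I₃) (Vs : Tensor I₂ R I₃)
    (hsvd : IsSkinnyTSVD Xs Us Sig Vs)
    (Lk : Tensor I₁ R I₃) (Rk : Tensor I₂ R I₃) (Q Qi : Tensor R R I₃) (hQ : TInv Q Qi) :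
    froNorm (tprod Lk (tT Rk) - Xs)
      ≤ Real.sqrt 2 * alignErr Lk (tprod Us (sqrtT Sig)) Rk (tprod Vs (sqrtT Sig)) (sqrtT Sig) Q Qi
        + (Real.sqrt I₃ / (2 * sigmaMin Sig)) *
          (alignErr Lk (tprod Us (sqrtT Sig)) Rk (tprod Vs (sqrtT Sig)) (sqrtT Sig) Q Qi)^2 := by
  have hI3 : (0:ℝ) < I₃ := by exact_mod_cast Nat.pos_of_ne_zero (NeZero.ne I₃)
  have hsm := sigmaMin_pos Sig hsvd.diag
  set Sh := sqrtT Sig with hSh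
  set Ls := tprod Us Sh with hLs
  set Rs := tprod Vs Sh with hRs
  set DL := tprod Lk Q - Ls with hDL
  set DR := tprod Rk (tT Qi) - Rs with hDR
  set a := froNorm (tprod DL Sh) with ha'
  set b := froNorm (tprod DR Sh) with hb'
  set m := alignErr Lk Ls Rk Rs Sh Q Qi with hm'
  have hm : m = Real.sqrt (a^2 + b^2) := rfl
  have hann : 0 ≤ a := froNorm_nonneg _
  have hbnn : 0 ≤ b := froNorm_nonneg _
  have hmnn : 0 ≤ m := by rw [hm]; exact Real.sqrt_nonneg _
  have hm2 : m^2 = a^2 + b^2 := by rw [hm]; exact Real.sq_sqrt (by positivity)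
  have ha2 : a^2 = fro2 (tprod DL Sh) := by rw [ha']; exact froNorm_sq _
  have hb2 : b^2 = fro2 (tprod DR Sh) := by rw [hb']; exact froNorm_sq _
  have hdecomp := tensor_decomp Xs Us Sig Vs hsvd Lk Rk Q Qi hQ
  rw [hdecomp]
  refine (froNorm_add3_le _ _ _).trans ?_
  have h1 : froNorm (tprod DL (tT Rs)) = a := by
    rw [ha', froNorm, froNorm, fro2_mul_tTRs DL Sig Vs hsvd.diag hsvd.orthV]
  have h2 : froNorm (tprod Ls (tT DR)) = b := by
    rw [hb', froNorm, froNorm, fro2_Ls_mul DR Sig Us hsvd.diag hsvd.orthU]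
  have h3 : froNorm (tprod DL (tT DR)) ≤ Real.sqrt I₃ * a * b * (sigmaMin Sig)⁻¹ := by
    have hc := fro2_cross_le DL DR Sig hsvd.diag
    have harg : (I₃:ℝ) * fro2 (tprod DL Sh) * fro2 (tprod DR Sh) * ((sigmaMin Sig)⁻¹)^2
        = (Real.sqrt I₃ * a * b * (sigmaMin Sig)⁻¹)^2 := by
      have hsqI : (Real.sqrt I₃)^2 = (I₃:ℝ) := Real.sq_sqrt (Nat.cast_nonneg I₃)
      rw [mul_pow, mul_pow, mul_pow, hsqI, ha2, hb2]
    calc froNorm (tprod DL (tT DR)) = Real.sqrt (fro2 (tprod DL (tT DR))) := rfl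
      _ ≤ Real.sqrt ((I₃:ℝ) * fro2 (tprod DL Sh) * fro2 (tprod DR Sh) * ((sigmaMin Sig)⁻¹)^2) :=
          Real.sqrt_le_sqrt hc
      _ = Real.sqrt ((Real.sqrt I₃ * a * b * (sigmaMin Sig)⁻¹)^2) := by rw [harg]
      _ = Real.sqrt I₃ * a * b * (sigmaMin Sig)⁻¹ := Real.sqrt_sq
          (mul_nonneg (mul_nonneg (mul_nonneg (Real.sqrt_nonneg _) hann) hbnn)
            (inv_nonneg.mpr hsm.le))
  have hab2 : a + b ≤ Real.sqrt 2 * m := by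
    have h2m : (Real.sqrt 2 * m)^2 = 2*(a^2+b^2) := by
      rw [mul_pow, Real.sq_sqrt (by norm_num : (0:ℝ) ≤ 2), hm2]
    have hle : (a+b)^2 ≤ (Real.sqrt 2*m)^2 := by rw [h2m]; nlinarith [sq_nonneg (a - b)]
    calc a + b = Real.sqrt ((a+b)^2) := (Real.sqrt_sq (by positivity)).symm
      _ ≤ Real.sqrt ((Real.sqrt 2*m)^2) := Real.sqrt_le_sqrt hle
      _ = Real.sqrt 2*m := Real.sqrt_sq (by positivity)
  have habm : a*b ≤ m^2/2 := by rw [hm2]; nlinarith [sq_nonneg (a - b)]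
  have hcross : Real.sqrt I₃ * a * b * (sigmaMin Sig)⁻¹
      ≤ Real.sqrt I₃/(2*sigmaMin Sig) * m^2 := by
    have hstep : Real.sqrt I₃ * (sigmaMin Sig)⁻¹ * (a*b)
        ≤ Real.sqrt I₃ * (sigmaMin Sig)⁻¹ * (m^2/2) :=
      mul_le_mul_of_nonneg_left habm (mul_nonneg (Real.sqrt_nonneg _) (inv_nonneg.mpr hsm.le))
    calc Real.sqrt I₃ * a * b * (sigmaMin Sig)⁻¹
        = Real.sqrt I₃ * (sigmaMin Sig)⁻¹ * (a*b) := by ring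
      _ ≤ Real.sqrt I₃ * (sigmaMin Sig)⁻¹ * (m^2/2) := hstep
      _ = Real.sqrt I₃/(2*sigmaMin Sig) * m^2 := by
          rw [div_eq_mul_inv (Real.sqrt I₃) (2*sigmaMin Sig), mul_inv]
          ring
  rw [h1, h2]
  linarith
end AuxClaimA

/-- the distance metric controls the Frobenius error of the
low-rank estimate. -/
theorem froNorm_le_dist
    {I₁ I₂ I₃ R : ℕ}
    (Xs : Tensor I₁ I₂ I₃) (Us : Tensor I₁ R I₃) (Sig : Tensor R R I₃) (Vs : Tensor I₂ R I₃)
    (hsvd : IsSkinnyTSVD Xs Us Sig Vs)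
    (Lk : Tensor I₁ R I₃) (Rk : Tensor I₂ R I₃)
    (ε : ℝ) (hε₀ : 0 < ε) (hε₁ : ε < 1)
    (hdist : distT Lk (tprod Us (sqrtT Sig)) Rk (tprod Vs (sqrtT Sig)) (sqrtT Sig)
      ≤ ε / Real.sqrt I₃ * sigmaMin Sig) :
    froNorm (tprod Lk (tT Rk) - Xs)
      ≤ (1 + ε / 2) * Real.sqrt 2 *
        distT Lk (tprod Us (sqrtT Sig)) Rk (tprod Vs (sqrtT Sig)) (sqrtT Sig) := by
  classical
  set Sh := sqrtT Sig with hSh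
  set Ls := tprod Us Sh with hLs
  set Rs := tprod Vs Sh with hRs
  set D := distT Lk Ls Rk Rs Sh with hD
  have hDdef : D = sInf {d : ℝ | ∃ Q Qi : Tensor R R I₃, TInv Q Qi ∧ d = alignErr Lk Ls Rk Rs Sh Q Qi} := rfl
  have hSnn : ∀ x ∈ {d : ℝ | ∃ Q Qi : Tensor R R I₃, TInv Q Qi ∧ d = alignErr Lk Ls Rk Rs Sh Q Qi},
      0 ≤ x := by
    rintro x ⟨Q, Qi, hq, rfl⟩
    exact Real.sqrt_nonneg _
  have hD0 : 0 ≤ D := by rw [hDdef]; exact Real.sInf_nonneg hSnn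
  rcases Nat.eq_zero_or_pos I₃ with hI3z | hI3p
  · subst hI3z
    have hLHS : froNorm (tprod Lk (tT Rk) - Xs) = 0 := by
      rw [froNorm, fro2]
      simp
    rw [hLHS]
    have h1 : (0:ℝ) ≤ (1 + ε/2) * Real.sqrt 2 := by positivity
    exact mul_nonneg h1 hD0
  haveI : NeZero I₃ := ⟨hI3p.ne'⟩
  rcases Nat.eq_zero_or_pos R with hRz | hRp
  · subst hRz
    have hsmin : sigmaMin Sig = 0 := by
      rw [sigmaMin]
      simp [Real.iInf_of_isEmpty, ciInf_const]
    rw [hsmin, mul_zero] at hdist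
    have hDz : D = 0 := le_antisymm hdist hD0
    rw [hDz, mul_zero]
    have hzero : tprod Lk (tT Rk) - Xs = (fun _ _ _ => (0:ℝ)) := by
      funext i j k
      have h1 : tprod Lk (tT Rk) i j k
          = ∑ l : Fin 0, ∑ t : Fin I₃, Lk i l t * tT Rk l j (k - t) := rfl
      have h2 : Xs i j k = 0 := by
        rw [hsvd.decomp]
        have h3 : tprod (tprod Us Sig) (tT Vs) i j k
            = ∑ l : Fin 0, ∑ t : Fin I₃, tprod Us Sig i l t * tT Vs l j (k - t) := rfl
        rw [h3]
        simp
      show tprod Lk (tT Rk) i j k - Xs i j k = 0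
      rw [h1, h2]
      simp
    rw [hzero, froNorm, fro2]
    simp
  haveI : NeZero R := ⟨hRp.ne'⟩
  have hI3R : (0:ℝ) < I₃ := by exact_mod_cast hI3p
  have hsm := sigmaMin_pos Sig hsvd.diag
  have hne : Set.Nonempty {d : ℝ | ∃ Q Qi : Tensor R R I₃, TInv Q Qi ∧ d = alignErr Lk Ls Rk Rs Sh Q Qi} :=
    ⟨_, idT R I₃, idT R I₃, TInv_idT, rfl⟩
  set c := Real.sqrt I₃ / (2 * sigmaMin Sig) with hc
  have hcnn : 0 ≤ c := div_nonneg (Real.sqrt_nonneg _) (by linarith)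
  have key : ∀ δ, 0 < δ → froNorm (tprod Lk (tT Rk) - Xs) ≤ Real.sqrt 2 * (D + δ) + c * (D + δ)^2 := by
    intro δ hδ
    obtain ⟨x, hxS, hxlt⟩ := Real.lt_sInf_add_pos hne hδ
    obtain ⟨Q, Qi, hQ, rfl⟩ := hxS
    rw [← hDdef] at hxlt
    have h := claimA Xs Us Sig Vs hsvd Lk Rk Q Qi hQ
    rw [← hSh, ← hLs, ← hRs, ← hc] at h
    refine h.trans ?_
    have hmnn : 0 ≤ alignErr Lk Ls Rk Rs Sh Q Qi := Real.sqrt_nonneg _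
    have hle : alignErr Lk Ls Rk Rs Sh Q Qi ≤ D + δ := le_of_lt hxlt
    have t1 : Real.sqrt 2 * alignErr Lk Ls Rk Rs Sh Q Qi ≤ Real.sqrt 2 * (D + δ) :=
      mul_le_mul_of_nonneg_left hle (Real.sqrt_nonneg _)
    have t2 : c * (alignErr Lk Ls Rk Rs Sh Q Qi)^2 ≤ c * (D + δ)^2 :=
      mul_le_mul_of_nonneg_left (pow_le_pow_left₀ hmnn hle 2) hcnn
    linarith
  have hlim : froNorm (tprod Lk (tT Rk) - Xs) ≤ Real.sqrt 2 * D + c * D^2 := by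
    have hcont : Continuous (fun δ : ℝ => Real.sqrt 2 * (D + δ) + c * (D + δ)^2) := by
      exact (continuous_const.mul (continuous_const.add continuous_id)).add
        (continuous_const.mul ((continuous_const.add continuous_id).pow 2))
    have htend : Filter.Tendsto (fun δ : ℝ => Real.sqrt 2 * (D + δ) + c * (D + δ)^2)
        (nhdsWithin 0 (Set.Ioi 0)) (nhds (Real.sqrt 2 * (D + 0) + c * (D + 0)^2)) :=
      (hcont.tendsto 0).mono_left nhdsWithin_le_nhds
    rw [add_zero] at htend
    refine ge_of_tendsto htend ?_
    filter_upwards [self_mem_nhdsWithin] with δ hδ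
    exact key δ hδ
  refine hlim.trans ?_
  have hsqI3 : 0 < Real.sqrt I₃ := Real.sqrt_pos.mpr hI3R
  have hcD : c * D ≤ ε/2 := by
    have h1 : c * D ≤ c * (ε / Real.sqrt I₃ * sigmaMin Sig) := mul_le_mul_of_nonneg_left hdist hcnn
    refine h1.trans (le_of_eq ?_)
    rw [hc]
    field_simp
  have hsqrt2 : 1 ≤ Real.sqrt 2 := by
    rw [show (1:ℝ) = Real.sqrt 1 by simp]
    exact Real.sqrt_le_sqrt (by norm_num)
  have hclaim : c * D^2 ≤ ε/2 * D := by
    have h2 : c*D*D ≤ (ε/2)*D := mul_le_mul_of_nonneg_right hcD hD0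
    nlinarith [h2]
  have hfinal : Real.sqrt 2 * D + ε/2 * D ≤ (1 + ε/2) * Real.sqrt 2 * D := by
    nlinarith [mul_nonneg (mul_nonneg hε₀.le hD0) (sub_nonneg.mpr hsqrt2)]
  linarith
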